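/- Let f : ℝ → ℝ be continuous with f(t) = 0 for t ≤ 0 and suppose t ↦ f(t)/t³ is increasing on (0,∞). Then the function s ↦ s·f(s) - 4·F(s) is monotone increasing on [0,∞), where F(s) = ∫₀ˢ f(τ) dτ. In particular s·f(s) - 4·F(s) ≥ 0 for all s ≥ 0. -/

import Mathlib

open MeasureTheory Set

theorem stmt_1 (f : ℝ → ℝ) (hfc : Continuous f) (hf0 : ∀ t ≤ (0 : ℝ), f t = 0)
    (hfpos : ∀ t > (0 : ℝ), 0 < f t)
    (hmono : MonotoneOn (fun t => f t / t ^ 3) (Set.Ioi (0 : ℝ))) :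
    MonotoneOn (fun s => s * f s - 4 * ∫ τ in (0 : ℝ)..s, f τ) (Set.Ici (0 : ℝ)) ∧
      ∀ s ≥ (0 : ℝ), 0 ≤ s * f s - 4 * ∫ τ in (0 : ℝ)..s, f τ := by
  have key : MonotoneOn (fun s => s * f s - 4 * ∫ τ in (0 : ℝ)..s, f τ) (Set.Ici (0 : ℝ)) := by
    intro a ha b hb hab
    simp only [mem_Ici] at ha hb
    rcases eq_or_lt_of_le hab with rfl | hlt
    · exact le_refl _
    have hb0 : 0 < b := lt_of_le_of_lt ha hlt
    have hb3 : (0:ℝ) < b ^ 3 := by positivity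
    set c := f b / b ^ 3 with hc
    have hcnn : 0 ≤ c := le_of_lt (div_pos (hfpos b hb0) hb3)
    have hsub : (∫ τ in (0:ℝ)..b, f τ) - (∫ τ in (0:ℝ)..a, f τ) = ∫ τ in a..b, f τ :=
      intervalIntegral.integral_interval_sub_left (hfc.intervalIntegrable 0 b)
        (hfc.intervalIntegrable 0 a)
    have h1 : (∫ τ in a..b, f τ) ≤ ∫ τ in a..b, c * τ ^ 3 := by
      apply intervalIntegral.integral_mono_on hab (hfc.intervalIntegrable a b)
        ((continuous_const.mul (continuous_pow 3)).intervalIntegrable a b)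
      intro t ht
      rcases eq_or_lt_of_le (le_trans ha ht.1) with rfl | ht0
      · simp [hf0 0 le_rfl]
      · have h2 : f t / t ^ 3 ≤ c := hmono (mem_Ioi.mpr ht0) (mem_Ioi.mpr hb0) ht.2
        have ht3 : (0:ℝ) < t ^ 3 := by positivity
        calc f t = (f t / t ^ 3) * t ^ 3 := by field_simp
          _ ≤ c * t ^ 3 := by nlinarith
    have h2 : (∫ τ in a..b, c * τ ^ 3) = c * ((b ^ 4 - a ^ 4) / 4) := by
      rw [intervalIntegral.integral_const_mul, integral_pow]
      norm_num
    have haf : a * f a ≤ c * a ^ 4 := by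
      rcases eq_or_lt_of_le ha with rfl | ha0
      · simp [hf0 0 le_rfl]
      · have h3 : f a / a ^ 3 ≤ c := hmono (mem_Ioi.mpr ha0) (mem_Ioi.mpr hb0) hab
        have ha3 : (0:ℝ) < a ^ 3 := by positivity
        have : f a ≤ c * a ^ 3 := by
          calc f a = (f a / a ^ 3) * a ^ 3 := by field_simp
            _ ≤ c * a ^ 3 := by nlinarith
        nlinarith
    have hcb : c * b ^ 4 = b * f b := by
      field_simp [hc]
      rw [hc, div_mul_cancel₀ _ hb3.ne']
    simp only
    nlinarith [h1, h2, hsub, haf, hcb]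
  refine ⟨key, fun s hs => ?_⟩
  have := key (mem_Ici.mpr le_rfl) (mem_Ici.mpr hs) hs
  simpa [hf0 0 le_rfl] using this
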